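/- Let T : C[0,1] → C[0,1] be a positive linear operator with T(e₀) = e₀ and T(e₁) ≤ e₁ (pointwise on [0,1]), and let g ∈ C[0,1] be twice continuously differentiable on [0,1], nonincreasing and convex. Then for every x ∈ [0,1] and every m ∈ ℕ one has g(x) ≤ T^m(g;x) ≤ T^{m+1}(g;x) ≤ ‖g‖; in particular the sequence of functions (T^m(g))_m is pointwise nondecreasing and uniformly bounded by ‖g‖. -/

import Mathlib

open Filter

noncomputable section

/-- The unit interval `[0,1]` as a subset of `ℝ`. -/
abbrev I01 : Set ℝ := Set.Icc 0 1

/-- The space `C[0,1]` of continuous real-valued functions on `[0,1]`. -/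
abbrev CI := C(I01, ℝ)

/-- The monomial `e i : x ↦ x ^ i`. -/
def e (i : ℕ) : CI := ⟨fun x => (x : ℝ) ^ i, (continuous_subtype_val).pow i⟩

/-- A linear operator on `C[0,1]` is positive if it maps nonnegative functions to
nonnegative functions. -/
def IsPositive (T : CI →ₗ[ℝ] CI) : Prop :=
  ∀ f : CI, (∀ x, 0 ≤ f x) → ∀ x, 0 ≤ T f x

/-- The `m`-th iterate of `T`. -/
def iter (T : CI →ₗ[ℝ] CI) : ℕ → (CI →ₗ[ℝ] CI)
  | 0 => LinearMap.id
  | m + 1 => T ∘ₗ iter T m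

theorem stmt10 (T : CI →ₗ[ℝ] CI) (hpos : IsPositive T)
    (h0 : T (e 0) = e 0) (h1 : ∀ x : I01, T (e 1) x ≤ e 1 x)
    (g : ℝ → ℝ) (G : CI) (hGg : ∀ x : I01, G x = g x)
    (hg : ContDiffOn ℝ 2 g I01)
    (hanti : AntitoneOn g I01) (hconvex : ConvexOn ℝ I01 g) :
    ∀ x : I01, ∀ m : ℕ,
      g x ≤ iter T m G x ∧ iter T m G x ≤ iter T (m + 1) G x ∧
        iter T (m + 1) G x ≤ ‖G‖ := by
  classical
  -- monotonicity of T
  have hmono : ∀ f h : CI, (∀ x, f x ≤ h x) → ∀ x, T f x ≤ T h x := by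
    intro f h hfh x
    have := hpos (h - f) (fun y => by simpa using sub_nonneg.mpr (hfh y)) x
    simpa [sub_nonneg] using this
  -- key lemma : G ≤ T G pointwise
  have key : ∀ x₀ : I01, G x₀ ≤ T G x₀ := by
    intro x₀
    have hdiff : DifferentiableWithinAt ℝ g I01 (x₀ : ℝ) :=
      (hg.differentiableOn (by norm_num)) (x₀ : ℝ) x₀.2
    set c : ℝ := derivWithin g I01 (x₀ : ℝ) with hc
    -- nonpositivity of c
    have hx00 : (0:ℝ) ≤ (x₀ : ℝ) := x₀.2.1
    have hx01 : (x₀ : ℝ) ≤ 1 := x₀.2.2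
    have hNB : (nhdsWithin (x₀ : ℝ) (I01 \ {(x₀ : ℝ)})).NeBot := by
      rw [← mem_closure_iff_nhdsWithin_neBot]
      rcases lt_or_eq_of_le hx01 with hx1 | hx1
      · have hsub : Set.Ioo (x₀ : ℝ) 1 ⊆ I01 \ {(x₀ : ℝ)} := by
          intro t ht
          exact ⟨⟨le_trans hx00 ht.1.le, ht.2.le⟩, fun h => (ne_of_gt ht.1) (Set.mem_singleton_iff.mp h)⟩
        have : (x₀ : ℝ) ∈ closure (Set.Ioo (x₀ : ℝ) 1) := by
          rw [closure_Ioo (ne_of_lt hx1)]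
          exact ⟨le_refl _, hx01⟩
        exact closure_mono hsub this
      · have hsub : Set.Ioo (0 : ℝ) 1 ⊆ I01 \ {(x₀ : ℝ)} := by
          intro t ht
          exact ⟨⟨ht.1.le, ht.2.le⟩, fun h => by rw [h, ← hx1] at ht; exact absurd rfl (ne_of_lt ht.2)⟩
        have : (x₀ : ℝ) ∈ closure (Set.Ioo (0 : ℝ) 1) := by
          rw [closure_Ioo (by norm_num : (0:ℝ) ≠ 1)]
          exact ⟨hx00, hx01⟩
        exact closure_mono hsub this
    have hcle : c ≤ 0 := by
      have hd : HasDerivWithinAt g c I01 (x₀ : ℝ) := hdiff.hasDerivWithinAt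
      rw [hasDerivWithinAt_iff_tendsto_slope] at hd
      refine le_of_tendsto hd ?_
      filter_upwards [self_mem_nhdsWithin] with t ht
      rcases ht with ⟨htI, htne⟩
      have htne' : t ≠ (x₀ : ℝ) := htne
      rw [slope_def_field]
      rcases lt_or_gt_of_ne htne' with hlt | hgt
      · apply div_nonpos_of_nonneg_of_nonpos
        · exact sub_nonneg.mpr (hanti htI x₀.2 hlt.le)
        · linarith
      · apply div_nonpos_of_nonpos_of_nonneg
        · exact sub_nonpos.mpr (hanti x₀.2 htI hgt.le)
        · linarith
    -- supporting line
    have hline : ∀ t : ℝ, t ∈ I01 → g (x₀ : ℝ) + c * (t - (x₀ : ℝ)) ≤ g t := by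
      intro t htI
      rcases lt_trichotomy t (x₀ : ℝ) with hlt | heq | hgt
      · have := hconvex.slope_le_derivWithin htI x₀.2 hlt hdiff
        rw [slope_def_field] at this
        rw [div_le_iff₀ (by linarith : (0:ℝ) < (x₀ : ℝ) - t)] at this
        nlinarith
      · rw [heq]; simp
      · have := hconvex.derivWithin_le_slope x₀.2 htI hgt hdiff
        rw [slope_def_field] at this
        rw [le_div_iff₀ (by linarith : (0:ℝ) < t - (x₀ : ℝ))] at this
        nlinarith
    -- build the nonnegative function
    set h : CI := G - ((g (x₀ : ℝ) - c * (x₀ : ℝ)) • e 0 + c • e 1) with hh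
    have hhnn : ∀ t : I01, 0 ≤ h t := by
      intro t
      have := hline (t : ℝ) t.2
      have hGt := hGg t
      simp only [hh, ContinuousMap.sub_apply, ContinuousMap.add_apply,
        ContinuousMap.smul_apply, smul_eq_mul, e, ContinuousMap.coe_mk, pow_zero, pow_one]
      rw [hGt]
      nlinarith
    have hTh := hpos h hhnn x₀
    have hTh' : T h = T G - ((g (x₀ : ℝ) - c * (x₀ : ℝ)) • T (e 0) + c • T (e 1)) := by
      rw [hh]; rw [map_sub, map_add, map_smul, map_smul]
    rw [hTh', h0] at hTh
    have hTe1 := h1 x₀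
    have he0 : (e 0) x₀ = 1 := by simp [e]
    have he1 : (e 1) x₀ = (x₀ : ℝ) := by simp [e]
    simp only [ContinuousMap.sub_apply, ContinuousMap.add_apply,
      ContinuousMap.smul_apply, smul_eq_mul, he0, he1, mul_one] at hTh hTe1
    have hmul : c * (x₀ : ℝ) ≤ c * (T (e 1) x₀) :=
      mul_le_mul_of_nonpos_left hTe1 hcle
    have hGx := hGg x₀
    rw [hGx]
    linarith
  -- pointwise monotonicity of iterates
  have hb : ∀ m : ℕ, ∀ x : I01, iter T m G x ≤ iter T (m + 1) G x := by
    intro m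
    induction m with
    | zero => intro x; simpa [iter] using key x
    | succ n ih =>
      intro x
      have : ∀ y : I01, iter T n G y ≤ iter T (n + 1) G y := ih
      simpa [iter] using hmono (iter T n G) (iter T (n + 1) G) this x
  -- positivity-based upper bound
  have hub : ∀ m : ℕ, ∀ x : I01, iter T m G x ≤ ‖G‖ := by
    intro m
    induction m with
    | zero =>
      intro x
      simp only [iter, LinearMap.id_coe, id_eq]
      exact (le_abs_self _).trans (G.norm_coe_le_norm x)
    | succ n ih =>
      intro x
      have hnn : ∀ y : I01, 0 ≤ (‖G‖ • e 0 - iter T n G) y := by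
        intro y
        have := ih y
        simp only [ContinuousMap.sub_apply, ContinuousMap.smul_apply, smul_eq_mul, e,
          ContinuousMap.coe_mk, pow_zero, mul_one]
        linarith
      have := hpos _ hnn x
      have hT : T (‖G‖ • e 0 - iter T n G) = ‖G‖ • e 0 - T (iter T n G) := by
        rw [map_sub, map_smul, h0]
      rw [hT] at this
      simp only [ContinuousMap.sub_apply, ContinuousMap.smul_apply, smul_eq_mul, e,
        ContinuousMap.coe_mk, pow_zero, mul_one] at this
      have : T (iter T n G) x ≤ ‖G‖ := by linarith
      simpa [iter] using this
  -- lower bound via chaining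
  have ha : ∀ m : ℕ, ∀ x : I01, g x ≤ iter T m G x := by
    intro m
    induction m with
    | zero => intro x; simp [iter, hGg x]
    | succ n ih => intro x; exact (ih x).trans (hb n x)
  intro x m
  exact ⟨ha m x, hb m x, hub (m + 1) x⟩
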